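/- The key determinant identities hold: for every r ∈ ℝ³, the determinant of the 3×3 matrix with columns f₁(r), f₃(r), f₅(r) equals (r_y² − r_z³ + r_z²)·(γ/ω), and the determinant of the 3×3 matrix with columns f₁(r), f₃(r), f₆(r) equals 3 r_y r_z²·(γ/ω). -/

import Mathlib

open MeasureTheory Set

noncomputable section

/-- The state space: Bloch vectors in `ℝ³` with the Euclidean norm. -/
abbrev Pt := EuclideanSpace ℝ (Fin 3)

/-- The drift vector field `f₀`. -/
def f0 (ω γ : ℝ) (r : Pt) : Pt :=
  WithLp.toLp 2 ![-r 1 - (γ / (2 * ω)) * r 0, r 0 - (γ / (2 * ω)) * r 1, (γ / ω) * (1 - r 2)]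

/-- The coherent-control vector field `f₁` (infinitesimal rotation about the `r_x`-axis). -/
def f1 (r : Pt) : Pt := WithLp.toLp 2 ![0, -r 2, r 1]

/-- The incoherent-control vector field `f₂`. -/
def f2 (r : Pt) : Pt := WithLp.toLp 2 ![-r 0 / 2, -r 1 / 2, -r 2]

/-- Lie bracket of vector fields on `ℝ³`: `[f,g](r) = Df(r)·g(r) − Dg(r)·f(r)`. -/
def lieB (f g : Pt → Pt) (r : Pt) : Pt := fderiv ℝ f r (g r) - fderiv ℝ g r (f r)

def Lmat (A : Matrix (Fin 3) (Fin 3) ℝ) : Pt →L[ℝ] Pt :=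
  LinearMap.toContinuousLinearMap (Matrix.toEuclideanLin A)

lemma Lmat_apply (A : Matrix (Fin 3) (Fin 3) ℝ) (r : Pt) (i : Fin 3) :
    Lmat A r i = A.mulVec (WithLp.ofLp r) i := rfl

lemma fderiv_affine (A : Matrix (Fin 3) (Fin 3) ℝ) (c : Pt) (f : Pt → Pt)
    (hf : f = fun r => Lmat A r + c) (r : Pt) : fderiv ℝ f r = Lmat A := by
  subst hf
  exact (((Lmat A).hasFDerivAt).add_const c).fderiv

variable (ω γ : ℝ)

def A0 : Matrix (Fin 3) (Fin 3) ℝ :=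
  !![-(γ/(2*ω)), -1, 0; 1, -(γ/(2*ω)), 0; 0, 0, -(γ/ω)]
def c0 : Pt := WithLp.toLp 2 ![0, 0, γ/ω]
def A1 : Matrix (Fin 3) (Fin 3) ℝ := !![0,0,0; 0,0,-1; 0,1,0]
def A3 : Matrix (Fin 3) (Fin 3) ℝ :=
  !![0, 0, 1; 0, 0, γ/(2*ω) - γ/ω; -1, γ/(2*ω) - γ/ω, 0]
def c3 : Pt := WithLp.toLp 2 ![0, γ/ω, 0]
def A5 : Matrix (Fin 3) (Fin 3) ℝ :=
  !![0, -1, 0; 1, 2*(γ/ω - γ/(2*ω)), 0; 0, 0, 2*(γ/(2*ω) - γ/ω)]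
def c5 : Pt := WithLp.toLp 2 ![0, 0, γ/ω]
def A6 : Matrix (Fin 3) (Fin 3) ℝ :=
  !![0, 0, -1; 0, 0, 4*(γ/ω - γ/(2*ω)); 1, 4*(γ/ω - γ/(2*ω)), 0]
def c6 : Pt := WithLp.toLp 2 ![0, -(γ/ω), 0]

lemma f0_eq : f0 ω γ = fun r => Lmat (A0 ω γ) r + c0 ω γ := by
  funext r; ext i
  fin_cases i <;>
    simp [f0, A0, c0, Lmat_apply, Matrix.mulVec, Fin.sum_univ_three,
      Matrix.vecHead, Matrix.vecTail, PiLp.add_apply] <;> ring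

lemma f1_eq : f1 = fun r => Lmat A1 r + (0 : Pt) := by
  funext r; ext i
  fin_cases i <;>
    simp [f1, A1, Lmat_apply, Matrix.mulVec, Fin.sum_univ_three,
      Matrix.vecHead, Matrix.vecTail, PiLp.add_apply]

lemma f3_eq : lieB (f0 ω γ) f1 = fun r => Lmat (A3 ω γ) r + c3 ω γ := by
  funext r; ext i
  rw [lieB, fderiv_affine (A0 ω γ) (c0 ω γ) _ (f0_eq ω γ),
    fderiv_affine A1 0 _ f1_eq]
  fin_cases i <;>
    simp [f0, f1, A0, A1, A3, c3, Lmat_apply, Matrix.mulVec, Fin.sum_univ_three,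
      Matrix.vecHead, Matrix.vecTail, PiLp.add_apply, PiLp.sub_apply] <;> ring

lemma f5_eq : lieB f1 (lieB (f0 ω γ) f1) = fun r => Lmat (A5 ω γ) r + c5 ω γ := by
  funext r; ext i
  rw [lieB, fderiv_affine (A3 ω γ) (c3 ω γ) _ (f3_eq ω γ),
    fderiv_affine A1 0 _ f1_eq]
  rw [f3_eq]
  fin_cases i <;>
    simp [f1, A1, A3, c3, A5, c5, Lmat_apply, Matrix.mulVec, Fin.sum_univ_three,
      Matrix.vecHead, Matrix.vecTail, PiLp.add_apply, PiLp.sub_apply] <;> ring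

lemma f6_eq : lieB f1 (lieB f1 (lieB (f0 ω γ) f1)) =
    fun r => Lmat (A6 ω γ) r + c6 ω γ := by
  funext r; ext i
  rw [lieB, fderiv_affine (A5 ω γ) (c5 ω γ) _ (f5_eq ω γ),
    fderiv_affine A1 0 _ f1_eq]
  rw [f5_eq]
  fin_cases i <;>
    simp [f1, A1, A5, c5, A6, c6, Lmat_apply, Matrix.mulVec, Fin.sum_univ_three,
      Matrix.vecHead, Matrix.vecTail, PiLp.add_apply, PiLp.sub_apply] <;> ring

/-- The key determinant identities: with `f₃ = [f₀,f₁]`, `f₅ = [f₁,f₃]`, `f₆ = [f₁,f₅]`,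
the determinant of the matrix with columns `f₁(r), f₃(r), f₅(r)` is
`(r_y² − r_z³ + r_z²)(γ/ω)`, and the determinant of the matrix with columns
`f₁(r), f₃(r), f₆(r)` is `3 r_y r_z² (γ/ω)`. -/
theorem det_identities (ω γ : ℝ) (hω : 0 < ω) (hγ : 0 ≤ γ) (r : Pt) :
    (Matrix.of fun i j : Fin 3 =>
        ![f1 r, lieB (f0 ω γ) f1 r, lieB f1 (lieB (f0 ω γ) f1) r] j i).det
      = (r 1 ^ 2 - r 2 ^ 3 + r 2 ^ 2) * (γ / ω) ∧
    (Matrix.of fun i j : Fin 3 =>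
        ![f1 r, lieB (f0 ω γ) f1 r,
          lieB f1 (lieB f1 (lieB (f0 ω γ) f1)) r] j i).det
      = 3 * r 1 * r 2 ^ 2 * (γ / ω) := by
  have hω' : ω ≠ 0 := ne_of_gt hω
  rw [f6_eq ω γ, f5_eq ω γ, f3_eq ω γ]
  constructor <;>
  · rw [Matrix.det_fin_three]
    simp [f1, A3, c3, A5, c5, A6, c6, Lmat_apply,
      Matrix.mulVec, Fin.sum_univ_three, Matrix.vecHead, Matrix.vecTail,
      PiLp.add_apply]
    field_simp
    ring
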